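/- (Restriction property of Cholesky-normalized Schur complements.) Let ρ, τ₁', τ₁'', τ₂ be finite index types, set τ₁ := τ₁' ⊕ τ₁'', and let A be a real matrix indexed by ρ ⊕ τ₁ ⊕ τ₂ whose block A_{ρρ} is invertible. For index blocks a, b ∈ {τ₁, τ₂, τ₁'} define the Schur complement with respect to ρ by S(a,b) := A_{ab} − A_{aρ}·A_{ρρ}^{−1}·A_{ρb}. Suppose C = [[C₁, 0],[X, C₂]] is a block lower triangular matrix over τ₁ = τ₁' ⊕ τ₁'' with C₁ and C₂ invertible and C·Cᵀ = S(τ₁, τ₁). Then C₁·C₁ᵀ = S(τ₁', τ₁'), and the submatrix of S(τ₂, τ₁)·(Cᵀ)^{−1} consisting of the columns indexed by τ₁' equals S(τ₂, τ₁')·(C₁ᵀ)^{−1}. -/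

import Mathlib

open Matrix

variable {ρ τ₁' τ₁'' τ₂ : Type*}

/-- The Schur complement, with respect to the `ρ`-block, of the submatrix of `A` with
rows indexed (via `f`) by `a` and columns indexed (via `g`) by `b`:
`S(a,b) = A_{ab} - A_{aρ} A_{ρρ}⁻¹ A_{ρb}`. -/
noncomputable def schurBlock {a b : Type*} [Fintype ρ] [DecidableEq ρ]
    (A : Matrix (ρ ⊕ (τ₁' ⊕ τ₁'') ⊕ τ₂) (ρ ⊕ (τ₁' ⊕ τ₁'') ⊕ τ₂) ℝ)
    (f : a → ρ ⊕ (τ₁' ⊕ τ₁'') ⊕ τ₂) (g : b → ρ ⊕ (τ₁' ⊕ τ₁'') ⊕ τ₂) : Matrix a b ℝ :=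
  A.submatrix f g -
    A.submatrix f Sum.inl * (A.submatrix Sum.inl Sum.inl)⁻¹ * A.submatrix Sum.inl g

/-- Restriction property of Cholesky-normalized Schur complements: if `C = [[C₁,0],[X,C₂]]`
is a block Cholesky factor of `S(τ₁,τ₁)` with `τ₁ = τ₁' ⊕ τ₁''`, then `C₁ C₁ᵀ = S(τ₁',τ₁')`
and the `τ₁'`-columns of `S(τ₂,τ₁) (Cᵀ)⁻¹` are `S(τ₂,τ₁') (C₁ᵀ)⁻¹`. -/
theorem schur_cholesky_restriction
    [Fintype ρ] [Fintype τ₁'] [Fintype τ₁''] [Fintype τ₂]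
    [DecidableEq ρ] [DecidableEq τ₁'] [DecidableEq τ₁''] [DecidableEq τ₂]
    (A : Matrix (ρ ⊕ (τ₁' ⊕ τ₁'') ⊕ τ₂) (ρ ⊕ (τ₁' ⊕ τ₁'') ⊕ τ₂) ℝ)
    (hρ : IsUnit (A.submatrix (Sum.inl : ρ → ρ ⊕ (τ₁' ⊕ τ₁'') ⊕ τ₂) Sum.inl))
    (C₁ : Matrix τ₁' τ₁' ℝ) (X : Matrix τ₁'' τ₁' ℝ) (C₂ : Matrix τ₁'' τ₁'' ℝ)
    (hC₁ : IsUnit C₁) (hC₂ : IsUnit C₂)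
    (hC : (Matrix.fromBlocks C₁ 0 X C₂) * (Matrix.fromBlocks C₁ 0 X C₂)ᵀ =
      schurBlock A (fun i : τ₁' ⊕ τ₁'' => Sum.inr (Sum.inl i))
        (fun i : τ₁' ⊕ τ₁'' => Sum.inr (Sum.inl i))) :
    C₁ * C₁ᵀ =
      schurBlock A (fun i : τ₁' => Sum.inr (Sum.inl (Sum.inl i)))
        (fun i : τ₁' => Sum.inr (Sum.inl (Sum.inl i))) ∧
    (schurBlock A (fun i : τ₂ => Sum.inr (Sum.inr i))
          (fun i : τ₁' ⊕ τ₁'' => Sum.inr (Sum.inl i)) *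
        ((Matrix.fromBlocks C₁ 0 X C₂)ᵀ)⁻¹).submatrix id Sum.inl =
      schurBlock A (fun i : τ₂ => Sum.inr (Sum.inr i))
          (fun i : τ₁' => Sum.inr (Sum.inl (Sum.inl i))) * (C₁ᵀ)⁻¹ := by

  classical
  have hCT : (Matrix.fromBlocks C₁ 0 X C₂)ᵀ = Matrix.fromBlocks C₁ᵀ Xᵀ 0 C₂ᵀ := by
    rw [Matrix.fromBlocks_transpose, Matrix.transpose_zero]
  have hCmul : Matrix.fromBlocks (C₁ * C₁ᵀ) (C₁ * Xᵀ) (X * C₁ᵀ) (X * Xᵀ + C₂ * C₂ᵀ) =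
      schurBlock A (fun i : τ₁' ⊕ τ₁'' => Sum.inr (Sum.inl i))
        (fun i : τ₁' ⊕ τ₁'' => Sum.inr (Sum.inl i)) := by
    rw [← hC, hCT, Matrix.fromBlocks_multiply]
    simp
  have h11 := congrArg Matrix.toBlocks₁₁ hCmul
  rw [Matrix.toBlocks_fromBlocks₁₁] at h11
  have hblk : (schurBlock A (fun i : τ₁' ⊕ τ₁'' => Sum.inr (Sum.inl i))
        (fun i : τ₁' ⊕ τ₁'' => Sum.inr (Sum.inl i))).toBlocks₁₁ =
      schurBlock A (fun i : τ₁' => Sum.inr (Sum.inl (Sum.inl i)))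
        (fun i : τ₁' => Sum.inr (Sum.inl (Sum.inl i))) := by
    ext i j
    simp [schurBlock, Matrix.toBlocks₁₁, Matrix.mul_apply]
  refine ⟨h11.trans hblk, ?_⟩
  have hinv : ((Matrix.fromBlocks C₁ 0 X C₂)ᵀ)⁻¹ =
      Matrix.fromBlocks (C₁ᵀ)⁻¹ (-((C₁ᵀ)⁻¹ * Xᵀ * (C₂ᵀ)⁻¹)) 0 (C₂ᵀ)⁻¹ := by
    rw [hCT, Matrix.inv_fromBlocks_zero₂₁_of_isUnit_iff]
    simp [Matrix.isUnit_transpose, hC₁, hC₂]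
  have hS : schurBlock A (fun i : τ₂ => Sum.inr (Sum.inr i))
        (fun i : τ₁' ⊕ τ₁'' => Sum.inr (Sum.inl i)) =
      Matrix.fromCols
        (schurBlock A (fun i : τ₂ => Sum.inr (Sum.inr i))
          (fun i : τ₁' => Sum.inr (Sum.inl (Sum.inl i))))
        (schurBlock A (fun i : τ₂ => Sum.inr (Sum.inr i))
          (fun i : τ₁'' => Sum.inr (Sum.inl (Sum.inr i)))) := by
    ext i (j | j) <;>
      simp [schurBlock, Matrix.fromCols, Matrix.mul_apply]
  rw [hinv, hS, Matrix.fromCols_mul_fromBlocks]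
  ext i j
  simp [Matrix.fromCols]
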